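/- Let G be a finite group, n m : ℕ, and let r : Fin m → FreeGroup (Fin n) be a presentation P of G. Let C₂ = Multiplicative (ZMod 2) and i = (1, -1) ∈ G × C₂. Suppose J : Fin m → ZMod 2 and â : Fin n → G × C₂ are such that the induced homomorphism lift â : FreeGroup (Fin n) → G × C₂ is surjective and lift â (r_k) = i^((J k).val) for all k. Then J lies in the image of the mod-2 exponent-sum homomorphism ρ : (Fin n → ZMod 2) → (Fin m → ZMod 2). (Equivalently: the direct product G × C₂ has only one presentation class arising from P, namely [P_1].) -/
import Mathlib


/-- The `i`-th exponent-sum homomorphism `FreeGroup (Fin n) → ℤ` (written multiplicatively),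
sending the `i`-th generator to `1` and all other generators to `0`. -/
noncomputable def expSum {n : ℕ} (i : Fin n) : FreeGroup (Fin n) →* Multiplicative ℤ :=
  FreeGroup.lift fun j => Multiplicative.ofAdd (if j = i then (1 : ℤ) else 0)

/-- The mod-2 exponent-sum homomorphism `ρ : C₂ⁿ → C₂ᵐ` of a tuple of relators,
`ρ(I)(k) = Σ_i ((r_k)_i mod 2) · I(i)`. -/
noncomputable def rho {n m : ℕ} (r : Fin m → FreeGroup (Fin n)) :
    (Fin n → ZMod 2) →+ (Fin m → ZMod 2) :=
  (Matrix.mulVecLin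
    (Matrix.of fun k i =>
      ((Multiplicative.toAdd (expSum i (r k)) : ℤ) : ZMod 2))).toAddMonoidHom

/-- Theorem `UniquePClass`: the direct product `G × C₂` has only one
presentation class arising from a presentation `P` of `G`, namely `[P_1]`; that is, any
`J` realized by a lift to `G × C₂` of the presentation lies in the image of `ρ`. -/
theorem stmt_6 {G : Type*} [Group G] [Finite G] {n m : ℕ}
    (r : Fin m → FreeGroup (Fin n))
    (hP : ∃ f : FreeGroup (Fin n) →* G, Function.Surjective f ∧
      f.ker = Subgroup.normalClosure (Set.range r))
    (J : Fin m → ZMod 2) (ahat : Fin n → G × Multiplicative (ZMod 2))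
    (hsurj : Function.Surjective (FreeGroup.lift ahat))
    (hrel : ∀ k, FreeGroup.lift ahat (r k) =
      ((1 : G), Multiplicative.ofAdd (1 : ZMod 2)) ^ (J k).val) :
    ∃ I : Fin n → ZMod 2, rho r I = J := by
  classical
  set I : Fin n → ZMod 2 := fun i => Multiplicative.toAdd (ahat i).2 with hI
  refine ⟨I, ?_⟩
  let g : Fin n → (FreeGroup (Fin n) →* Multiplicative (ZMod 2)) := fun i =>
    (AddMonoidHom.toMultiplicative (AddMonoidHom.mulRight (I i))).comp
      ((AddMonoidHom.toMultiplicative (Int.castAddHom (ZMod 2))).comp (expSum i))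
  have h1 : (MonoidHom.snd G (Multiplicative (ZMod 2))).comp (FreeGroup.lift ahat)
      = ∏ i, g i := by
    ext j
    simp only [g, expSum, MonoidHom.comp_apply, FreeGroup.lift_apply_of,
      AddMonoidHom.toMultiplicative_apply_apply, Int.coe_castAddHom, toAdd_ofAdd,
      AddMonoidHom.mulRight_apply, MonoidHom.finset_prod_apply]
    rw [Finset.prod_eq_single j (fun x _ hx => by
      simp [if_neg (fun h : j = x => hx h.symm)]) (by simp)]
    simp [hI]
  have key : ∀ w : FreeGroup (Fin n),
      Multiplicative.toAdd ((FreeGroup.lift ahat w).2) =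
      ∑ i, ((Multiplicative.toAdd (expSum i w) : ℤ) : ZMod 2) * I i := by
    intro w
    have := congrArg (fun f => Multiplicative.toAdd (f w)) h1
    simpa [g] using this
  funext k
  have hk := key (r k)
  rw [hrel k] at hk
  have : rho r I k = ∑ i, ((Multiplicative.toAdd (expSum i (r k)) : ℤ) : ZMod 2) * I i := by
    simp [rho, Matrix.mulVecLin, Matrix.mulVec, dotProduct]
  rw [this, ← hk]
  simp [ZMod.natCast_val, ZMod.cast_id]
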